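/- With sym₃ and skw₃ the totally symmetric and remainder parts of Grad T for a symmetric tensor field T, the identity Grad T · (Grad T)ᵀ = |sym₃ Grad T|² − (1/2)|skw₃ Grad T|² holds pointwise, where ᵀ is the cyclic transpose of a third-order tensor. -/
import Mathlib


open Real

noncomputable section

/-- Frobenius inner product of third-order tensors on ℝ³. -/
def dot3 (M N : Fin 3 → Fin 3 → Fin 3 → ℝ) : ℝ := ∑ i, ∑ j, ∑ k, M i j k * N i j k

/-- Cyclic transpose of a third-order tensor: `Mᵀ · (u⊗v⊗w) = M · (v⊗w⊗u)`. -/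
def cyc (M : Fin 3 → Fin 3 → Fin 3 → ℝ) : Fin 3 → Fin 3 → Fin 3 → ℝ := fun i j k => M j k i

/-- Totally symmetric part `(1/3)(M + Mᵀ + (Mᵀ)ᵀ)` of a third-order tensor. -/
def sym3 (M : Fin 3 → Fin 3 → Fin 3 → ℝ) : Fin 3 → Fin 3 → Fin 3 → ℝ :=
  fun i j k => (M i j k + cyc M i j k + cyc (cyc M) i j k) / 3

/-- The remainder part `skw₃ M = M − sym₃ M`. -/
def skw3 (M : Fin 3 → Fin 3 → Fin 3 → ℝ) : Fin 3 → Fin 3 → Fin 3 → ℝ :=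
  fun i j k => M i j k - sym3 M i j k

/-- For a third-order tensor `M` arising as the gradient of a symmetric second-order tensor
field (so `M i j k = M j i k`), one has
`M · Mᵀ = |sym₃ M|² − (1/2)|skw₃ M|²`, where `ᵀ` is the cyclic transpose. -/
theorem statement4
    (M : Fin 3 → Fin 3 → Fin 3 → ℝ)
    (hsym : ∀ i j k, M i j k = M j i k) :
    dot3 M (cyc M) = dot3 (sym3 M) (sym3 M) - (1/2) * dot3 (skw3 M) (skw3 M) := by
  simp only [dot3, cyc, sym3, skw3, Fin.sum_univ_three,
    hsym 1 0, hsym 2 0, hsym 2 1]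
  ring
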